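/- Let I ⊂ ℝ be a bounded closed nondegenerate interval and f ∈ ⋂_{r≥1} L^r(I). If f⁻ ∈ L^∞(I) or f⁺ ∈ L^∞(I), then lim_{r→∞} τ_r^f = ½(essinf_I f + esssup_I f), where τ_r^f is the unique minimizer of t ↦ ‖f − t‖_r for r > 1. -/

import Mathlib

open Set MeasureTheory Filter
open scoped ENNReal NNReal

lemma aux_lint_lt_top {μ : Measure ℝ} {h : ℝ → ℝ} {r : ℝ} (hr : 1 ≤ r)
    (hm : MemLp h (ENNReal.ofReal r) μ) :
    (∫⁻ x, (‖h x‖₊ : ℝ≥0∞) ^ r ∂μ) < ⊤ := by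
  have h0 : ENNReal.ofReal r ≠ 0 := by
    simp only [ne_eq, ENNReal.ofReal_eq_zero, not_le]; linarith
  have := (eLpNorm_lt_top_iff_lintegral_rpow_enorm_lt_top h0 ENNReal.ofReal_ne_top).mp hm.2
  rwa [ENNReal.toReal_ofReal (by linarith)] at this

lemma aux_key (μ : Measure ℝ) [IsFiniteMeasure μ] (g : ℝ → ℝ) (hg : Measurable g)
    (hLr : ∀ r : ℝ, 1 ≤ r → MemLp g (ENNReal.ofReal r) μ)
    (A B d K : ℝ) (hd : 0 < d) (hA : ∀ᵐ x ∂μ, g x ≤ A)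
    (hB : μ {x | g x < B} ≠ 0)
    (hgap : max (A - K + d) 0 < K - B - d) :
    ∀ᶠ r : ℝ in atTop, ∀ t : ℝ, K ≤ t →
      (∫⁻ x, (‖g x - (t - d)‖₊ : ℝ≥0∞) ^ r ∂μ) < ∫⁻ x, (‖g x - t‖₊ : ℝ≥0∞) ^ r ∂μ := by
  set G := K - B - d with hGdef
  set L := max (A - K + d) 0 with hLdef
  have hL0 : 0 ≤ L := le_max_right _ _
  have hG : 0 < G := lt_of_le_of_lt hL0 hgap
  set S := {x | g x < B} with hSdef
  have hSm : MeasurableSet S := measurableSet_lt hg measurable_const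
  have hμS : 0 < (μ S).toReal := ENNReal.toReal_pos hB (measure_ne_top μ S)
  have hμU : (μ Set.univ) ≠ ⊤ := measure_ne_top μ _
  have hev : ∀ᶠ r : ℝ in atTop,
      L ^ r * (μ Set.univ).toReal < r * d * G ^ (r - 1) * (μ S).toReal := by
    rcases eq_or_lt_of_le hL0 with hL | hL
    · filter_upwards [eventually_ge_atTop (1 : ℝ)] with r hr
      rw [← hL, Real.zero_rpow (by linarith), zero_mul]
      exact mul_pos (mul_pos (mul_pos (by linarith) hd) (Real.rpow_pos_of_pos hG _)) hμS
    · set q := L / G with hq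
      have hq1 : q < 1 := (div_lt_one hG).mpr hgap
      have hq0 : 0 < q := div_pos hL hG
      set c := d * (μ S).toReal / G with hc
      have hc0 : 0 < c := by positivity
      have htend : Tendsto (fun r : ℝ => q ^ r * (μ Set.univ).toReal) atTop (nhds 0) := by
        have h := (tendsto_rpow_atTop_of_base_lt_one q (by linarith) hq1).mul_const
          ((μ Set.univ).toReal)
        rwa [zero_mul] at h
      filter_upwards [htend.eventually_lt_const hc0, eventually_ge_atTop (1 : ℝ)] with r hr hr1
      have hGr : 0 < G ^ r := Real.rpow_pos_of_pos hG r
      have hLq : L = q * G := by rw [hq]; field_simp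
      have h2 : q ^ r * (μ Set.univ).toReal < r * c :=
        lt_of_lt_of_le hr (le_mul_of_one_le_left hc0.le hr1)
      calc L ^ r * (μ Set.univ).toReal
          = G ^ r * (q ^ r * (μ Set.univ).toReal) := by
            rw [hLq, Real.mul_rpow hq0.le hG.le]; ring
        _ < G ^ r * (r * c) := by exact mul_lt_mul_of_pos_left h2 hGr
        _ = r * d * (G ^ r / G) * (μ S).toReal := by rw [hc]; field_simp
        _ = r * d * G ^ (r - 1) * (μ S).toReal := by
            rw [Real.rpow_sub hG, Real.rpow_one]
  filter_upwards [hev, eventually_ge_atTop (1 : ℝ)] with r hE hr1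
  intro t ht
  have hr0 : (0 : ℝ) < r := by linarith
  set cE : ℝ≥0∞ := ENNReal.ofReal (r * d * G ^ (r - 1)) with hcE
  have habs : ∀ u : ℝ, (‖u‖₊ : ℝ≥0∞) ^ r = ENNReal.ofReal (|u| ^ r) := fun u => by
    rw [← enorm_eq_nnnorm, Real.enorm_eq_ofReal_abs, ENNReal.ofReal_rpow_of_nonneg (abs_nonneg u) hr0.le]
  have hpt : ∀ᵐ x ∂μ,
      (‖g x - (t - d)‖₊ : ℝ≥0∞) ^ r + S.indicator (fun _ => cE) x
        ≤ (‖g x - t‖₊ : ℝ≥0∞) ^ r + ENNReal.ofReal (L ^ r) := by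
    filter_upwards [hA] with x hAx
    by_cases hxS : x ∈ S
    · have hgx : g x < B := hxS
      obtain ⟨y, hy⟩ : ∃ y : ℝ, y = t - d - g x := ⟨_, rfl⟩
      have hyG : G ≤ y := by rw [hy, hGdef]; linarith
      have hy0 : 0 < y := lt_of_lt_of_le hG hyG
      have e1 : |g x - (t - d)| = y := by
        rw [abs_of_nonpos (by rw [hy] at hy0; linarith), hy]; ring
      have e2 : |g x - t| = y + d := by
        rw [abs_of_nonpos (by rw [hy] at hy0; linarith), hy]; ring
      have hbern : y ^ r + r * d * G ^ (r - 1) ≤ (y + d) ^ r := by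
        have h1 : 1 + r * (d / y) ≤ (1 + d / y) ^ r :=
          one_add_mul_self_le_rpow_one_add
            (le_trans (by norm_num : (-1 : ℝ) ≤ 0) (by positivity)) hr1
        have h2 : (y + d) ^ r = y ^ r * (1 + d / y) ^ r := by
          rw [← Real.mul_rpow hy0.le (by positivity)]
          congr 1; field_simp
        have h4 : y ^ (r - 1) = y ^ r / y := by
          rw [Real.rpow_sub hy0, Real.rpow_one]
        have h5 : G ^ (r - 1) ≤ y ^ (r - 1) := Real.rpow_le_rpow hG.le hyG (by linarith)
        have hyr : 0 < y ^ r := Real.rpow_pos_of_pos hy0 r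
        have h3 : y ^ r * (1 + r * (d / y)) = y ^ r + r * d * (y ^ r / y) := by
          field_simp
        calc y ^ r + r * d * G ^ (r - 1)
            ≤ y ^ r + r * d * y ^ (r - 1) := by nlinarith [mul_pos hr0 hd]
          _ = y ^ r * (1 + r * (d / y)) := by rw [h4]; exact h3.symm
          _ ≤ y ^ r * (1 + d / y) ^ r := mul_le_mul_of_nonneg_left h1 hyr.le
          _ = (y + d) ^ r := h2.symm
      rw [Set.indicator_of_mem hxS, habs, habs, e1, e2, hcE,
        ← ENNReal.ofReal_add (by positivity) (by positivity)]
      exact le_trans (le_trans (ENNReal.ofReal_le_ofReal hbern) le_rfl) le_self_add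
    · rw [Set.indicator_of_notMem hxS, add_zero, habs, habs]
      have hLr0 : 0 ≤ L ^ r := Real.rpow_nonneg hL0 r
      have hmain : |g x - (t - d)| ^ r ≤ |g x - t| ^ r + L ^ r := by
        by_cases hgt : g x ≤ t - d
        · have h1 : |g x - (t - d)| ≤ |g x - t| := by
            rw [abs_of_nonpos (by linarith), abs_of_nonpos (by linarith)]; linarith
          have := Real.rpow_le_rpow (abs_nonneg _) h1 hr0.le
          linarith
        · push_neg at hgt
          have h1 : |g x - (t - d)| ≤ L := by
            rw [abs_of_pos (by linarith)]
            exact le_trans (by linarith) (le_max_left (A - K + d) 0)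
          have := Real.rpow_le_rpow (abs_nonneg _) h1 hr0.le
          have h2 : 0 ≤ |g x - t| ^ r := Real.rpow_nonneg (abs_nonneg _) r
          linarith
      calc ENNReal.ofReal (|g x - (t - d)| ^ r)
          ≤ ENNReal.ofReal (|g x - t| ^ r + L ^ r) := ENNReal.ofReal_le_ofReal hmain
        _ = _ := ENNReal.ofReal_add (by positivity) (by positivity)
  have hmeas1 : Measurable fun x => (‖g x - (t - d)‖₊ : ℝ≥0∞) ^ r :=
    ENNReal.continuous_rpow_const.measurable.comp
      ((hg.sub measurable_const).nnnorm.coe_nnreal_ennreal)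
  have hmeas2 : Measurable fun x => (‖g x - t‖₊ : ℝ≥0∞) ^ r :=
    ENNReal.continuous_rpow_const.measurable.comp
      ((hg.sub measurable_const).nnnorm.coe_nnreal_ennreal)
  have key1 := lintegral_mono_ae hpt
  rw [lintegral_add_left hmeas1, lintegral_add_left hmeas2,
    lintegral_indicator_const hSm, lintegral_const] at key1
  have hI2 : ∫⁻ x, (‖g x - t‖₊ : ℝ≥0∞) ^ r ∂μ ≠ ⊤ :=
    (aux_lint_lt_top hr1 ((hLr r hr1).sub (memLp_const t))).ne
  have hlt : ENNReal.ofReal (L ^ r) * μ Set.univ < cE * μ S := by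
    rw [← ENNReal.ofReal_toReal hμU, ← ENNReal.ofReal_toReal (measure_ne_top μ S), hcE,
      ← ENNReal.ofReal_mul (by positivity), ← ENNReal.ofReal_mul (by positivity)]
    exact (ENNReal.ofReal_lt_ofReal_iff
      (mul_pos (mul_pos (mul_pos hr0 hd) (Real.rpow_pos_of_pos hG _)) hμS)).mpr hE
  have hcne : cE * μ S ≠ ⊤ := ENNReal.mul_ne_top ENNReal.ofReal_ne_top (measure_ne_top μ S)
  have := lt_of_le_of_lt key1 (ENNReal.add_lt_add_left hI2 hlt)
  exact (ENNReal.add_lt_add_iff_right hcne).mp this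

lemma aux_onesided (μ : Measure ℝ) [IsFiniteMeasure μ] (f : ℝ → ℝ) (hmf : Measurable f)
    (hLr : ∀ r : ℝ, 1 ≤ r → MemLp f (ENNReal.ofReal r) μ) (τ : ℝ → ℝ)
    (hτ : ∀ r : ℝ, 1 < r → ∀ t : ℝ,
        eLpNorm (fun x => f x - τ r) (ENNReal.ofReal r) μ
          ≤ eLpNorm (fun x => f x - t) (ENNReal.ofReal r) μ)
    (A B d K : ℝ) (hd : 0 < d) (hA : ∀ᵐ x ∂μ, f x ≤ A)
    (hB : μ {x | f x < B} ≠ 0)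
    (hgap : max (A - K + d) 0 < K - B - d) :
    ∀ᶠ r : ℝ in atTop, τ r < K := by
  filter_upwards [aux_key μ f hmf hLr A B d K hd hA hB hgap, eventually_gt_atTop (1 : ℝ)]
    with r hkey hr1
  by_contra hcon
  push_neg at hcon
  have h2 := hτ r hr1 (τ r - d)
  have h0 : ENNReal.ofReal r ≠ 0 := by
    simp only [ne_eq, ENNReal.ofReal_eq_zero, not_le]; linarith
  rw [eLpNorm_eq_lintegral_rpow_enorm_toReal h0 ENNReal.ofReal_ne_top,
    eLpNorm_eq_lintegral_rpow_enorm_toReal h0 ENNReal.ofReal_ne_top,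
    ENNReal.toReal_ofReal (by linarith)] at h2
  have h3 := (ENNReal.rpow_le_rpow_iff (div_pos one_pos (by linarith : (0:ℝ) < r))).mp h2
  exact absurd h3 (not_le.mpr (hkey (τ r) hcon))

theorem stmt16 (a b : ℝ) (hab : a < b) (f : ℝ → ℝ)
    (hLr : ∀ r : ℝ, 1 ≤ r → MemLp f (ENNReal.ofReal r) (volume.restrict (Set.Icc a b)))
    (hbd : MemLp (fun x => max (-f x) 0) ⊤ (volume.restrict (Set.Icc a b)) ∨
           MemLp (fun x => max (f x) 0) ⊤ (volume.restrict (Set.Icc a b)))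
    (τ : ℝ → ℝ)
    (hτ : ∀ r : ℝ, 1 < r → ∀ t : ℝ,
        eLpNorm (fun x => f x - τ r) (ENNReal.ofReal r) (volume.restrict (Set.Icc a b))
          ≤ eLpNorm (fun x => f x - t) (ENNReal.ofReal r) (volume.restrict (Set.Icc a b))) :
    Tendsto (fun r : ℝ => ((τ r : ℝ) : EReal)) atTop
      (nhds ((essInf (fun x => (f x : EReal)) (volume.restrict (Set.Icc a b))
        + essSup (fun x => (f x : EReal)) (volume.restrict (Set.Icc a b))) / 2)) := by
  set μ := volume.restrict (Set.Icc a b) with hμdef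
  have hμuniv : μ Set.univ = ENNReal.ofReal (b - a) := by
    rw [hμdef, Measure.restrict_apply_univ, Real.volume_Icc]
  haveI hfin : IsFiniteMeasure μ := by
    constructor; rw [hμuniv]; exact ENNReal.ofReal_lt_top
  have hμ0 : μ ≠ 0 := by
    intro h0
    rw [h0] at hμuniv
    simp only [Measure.coe_zero, Pi.zero_apply] at hμuniv
    have := ENNReal.ofReal_pos.mpr (by linarith : 0 < b - a)
    rw [← hμuniv] at this
    exact lt_irrefl _ this
  haveI hne : (ae μ).NeBot := ae_neBot.mpr hμ0
  have hsm := (hLr 1 le_rfl).1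
  set f' := hsm.mk f with hf'def
  have hmf' : StronglyMeasurable f' := hsm.stronglyMeasurable_mk
  have hff' : f =ᵐ[μ] f' := hsm.ae_eq_mk
  have hLr' : ∀ r : ℝ, 1 ≤ r → MemLp f' (ENNReal.ofReal r) μ := fun r hr =>
    (hLr r hr).ae_eq hff'
  have hτ' : ∀ r : ℝ, 1 < r → ∀ t : ℝ,
      eLpNorm (fun x => f' x - τ r) (ENNReal.ofReal r) μ
        ≤ eLpNorm (fun x => f' x - t) (ENNReal.ofReal r) μ := by
    intro r hr t
    have e1 : (fun x => f x - τ r) =ᵐ[μ] fun x => f' x - τ r :=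
      hff'.mono fun x hx => by simp only [hx]
    have e2 : (fun x => f x - t) =ᵐ[μ] fun x => f' x - t :=
      hff'.mono fun x hx => by simp only [hx]
    rw [← eLpNorm_congr_ae e1, ← eLpNorm_congr_ae e2]
    exact hτ r hr t
  have hmeq : essInf (fun x => (f x : EReal)) μ = essInf (fun x => (f' x : EReal)) μ :=
    essInf_congr_ae (hff'.mono fun x hx => by simp only [hx])
  have hMeq : essSup (fun x => (f x : EReal)) μ = essSup (fun x => (f' x : EReal)) μ :=
    essSup_congr_ae (hff'.mono fun x hx => by simp only [hx])
  rw [hmeq, hMeq]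
  obtain ⟨m, hm⟩ : ∃ x, essInf (fun x => (f' x : EReal)) μ = x := ⟨_, rfl⟩
  obtain ⟨M, hM⟩ : ∃ x, essSup (fun x => (f' x : EReal)) μ = x := ⟨_, rfl⟩
  rw [hm, hM]
  -- basic facts
  have hMnebot : M ≠ ⊥ := by
    intro hMb
    obtain ⟨x, hx⟩ := (ae_le_essSup (f := fun x => (f' x : EReal)) (μ := μ)).exists
    rw [hM, hMb, le_bot_iff] at hx
    exact EReal.coe_ne_bot _ hx
  have hmnetop : m ≠ ⊤ := by
    intro hmt
    obtain ⟨x, hx⟩ := (ae_essInf_le (f := fun x => (f' x : EReal)) (μ := μ)).exists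
    rw [hm, hmt, top_le_iff] at hx
    exact EReal.coe_ne_top _ hx
  have hSup_pos : ∀ β : ℝ, (β : EReal) < M → μ {x | β < f' x} ≠ 0 := by
    intro β hβ h0
    have hle : ∀ᵐ x ∂μ, (f' x : EReal) ≤ (β : EReal) := by
      rw [ae_iff]
      convert h0 using 2
      ext x
      simp only [Set.mem_setOf_eq, not_le, EReal.coe_lt_coe_iff]
    have := essSup_le_of_ae_le (μ := μ) (β : EReal) hle
    rw [hM] at this
    exact absurd this (not_le.mpr hβ)
  have hInf_pos : ∀ β : ℝ, m < (β : EReal) → μ {x | f' x < β} ≠ 0 := by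
    intro β hβ h0
    have hle : ∀ᵐ x ∂μ, (β : EReal) ≤ (f' x : EReal) := by
      rw [ae_iff]
      convert h0 using 2
      ext x
      simp only [Set.mem_setOf_eq, not_le, EReal.coe_lt_coe_iff]
    have := le_essInf_of_ae_le (μ := μ) (β : EReal) hle
    rw [hm] at this
    exact absurd this (not_le.mpr hβ)
  -- one-sided bounds
  have hupper : ∀ A B d K : ℝ, 0 < d → (∀ᵐ x ∂μ, f' x ≤ A) → μ {x | f' x < B} ≠ 0 →
      max (A - K + d) 0 < K - B - d → ∀ᶠ r : ℝ in atTop, τ r < K :=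
    fun A B d K hd hA hB hgap =>
      aux_onesided μ f' hmf'.measurable hLr' τ hτ' A B d K hd hA hB hgap
  have hlower : ∀ A B d K : ℝ, 0 < d → (∀ᵐ x ∂μ, -A ≤ f' x) → μ {x | B < f' x} ≠ 0 →
      max (A - K + d) 0 < K + B - d → ∀ᶠ r : ℝ in atTop, -K < τ r := by
    intro A B d K hd hA hB hgap
    have hτneg : ∀ r : ℝ, 1 < r → ∀ t : ℝ,
        eLpNorm (fun x => -f' x - (fun s => -τ s) r) (ENNReal.ofReal r) μ
          ≤ eLpNorm (fun x => -f' x - t) (ENNReal.ofReal r) μ := by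
      intro r hr t
      have e1 : (fun x => -f' x - (fun s => -τ s) r) = fun x => -(f' x - τ r) := by
        ext x; simp; ring
      have e2 : (fun x => -f' x - t) = fun x => -(f' x - -t) := by ext x; ring
      have n1 : eLpNorm (fun x => -(f' x - τ r)) (ENNReal.ofReal r) μ
          = eLpNorm (fun x => f' x - τ r) (ENNReal.ofReal r) μ := eLpNorm_neg _ _ _
      have n2 : eLpNorm (fun x => -(f' x - -t)) (ENNReal.ofReal r) μ
          = eLpNorm (fun x => f' x - -t) (ENNReal.ofReal r) μ := eLpNorm_neg _ _ _
      rw [e1, e2, n1, n2]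
      exact hτ' r hr (-t)
    have hmemneg : ∀ r : ℝ, 1 ≤ r → MemLp (fun x => -f' x) (ENNReal.ofReal r) μ :=
      fun r hr => (hLr' r hr).neg
    have hBneg : μ {x | -f' x < -B} ≠ 0 := by
      convert hB using 2
      ext x
      simp only [Set.mem_setOf_eq, neg_lt_neg_iff]
    have := aux_onesided μ (fun x => -f' x) hmf'.measurable.neg hmemneg (fun s => -τ s)
      hτneg A (-B) d K hd (hA.mono fun x hx => show -f' x ≤ A by linarith) hBneg
      (by simpa [sub_neg_eq_add] using hgap)
    exact this.mono fun r hr => by simpa using neg_lt_neg hr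
  -- boundedness from hbd
  have hbd' : (∃ C : ℝ, ∀ᵐ x ∂μ, -C ≤ f' x) ∨ (∃ C : ℝ, ∀ᵐ x ∂μ, f' x ≤ C) := by
    rcases hbd with h | h
    · left
      have h2 : MemLp (fun x => max (-f' x) 0) ⊤ μ :=
        h.ae_eq (hff'.mono fun x hx => by simp only [hx])
      have hN : eLpNormEssSup (fun x => max (-f' x) 0) μ ≠ ⊤ := by
        have := h2.2
        rwa [eLpNorm_exponent_top, lt_top_iff_ne_top] at this
      refine ⟨(eLpNormEssSup (fun x => max (-f' x) 0) μ).toReal, ?_⟩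
      filter_upwards [enorm_ae_le_eLpNormEssSup (fun x => max (-f' x) 0) μ] with x hx
      rw [Real.enorm_eq_ofReal_abs] at hx
      have h3 := (ENNReal.ofReal_le_iff_le_toReal hN).mp hx
      have h4 : -f' x ≤ max (-f' x) 0 := le_max_left _ _
      have h5 : max (-f' x) 0 ≤ |max (-f' x) 0| := le_abs_self _
      linarith
    · right
      have h2 : MemLp (fun x => max (f' x) 0) ⊤ μ :=
        h.ae_eq (hff'.mono fun x hx => by simp only [hx])
      have hN : eLpNormEssSup (fun x => max (f' x) 0) μ ≠ ⊤ := by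
        have := h2.2
        rwa [eLpNorm_exponent_top, lt_top_iff_ne_top] at this
      refine ⟨(eLpNormEssSup (fun x => max (f' x) 0) μ).toReal, ?_⟩
      filter_upwards [enorm_ae_le_eLpNormEssSup (fun x => max (f' x) 0) μ] with x hx
      rw [Real.enorm_eq_ofReal_abs] at hx
      have h3 := (ENNReal.ofReal_le_iff_le_toReal hN).mp hx
      have h4 : f' x ≤ max (f' x) 0 := le_max_left _ _
      have h5 : max (f' x) 0 ≤ |max (f' x) 0| := le_abs_self _
      linarith
  -- main case split
  rcases eq_or_ne m ⊥ with hmb | hmb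
  · -- m = ⊥ : limit is ⊥
    obtain ⟨C, hC⟩ : ∃ C : ℝ, ∀ᵐ x ∂μ, f' x ≤ C := by
      rcases hbd' with ⟨C, hC⟩ | h
      · exfalso
        have : ((-C : ℝ) : EReal) ≤ m := by
          rw [← hm]
          exact le_essInf_of_ae_le _ (hC.mono fun x hx => EReal.coe_le_coe_iff.mpr hx)
        rw [hmb, le_bot_iff] at this
        exact EReal.coe_ne_bot _ this
      · exact h
    rw [hmb, EReal.bot_add]
    have hbot2 : (⊥ : EReal) / 2 = ⊥ :=
      EReal.bot_div_of_pos_ne_top (by norm_num) (by exact_mod_cast EReal.coe_ne_top 2)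
    rw [hbot2, EReal.tendsto_nhds_bot_iff_real]
    intro K
    have hgap : max (C - K + 1) 0 < K - (K - max (C - K + 1) 0 - 2) - 1 := by
      have := le_max_right (C - K + 1) (0 : ℝ)
      linarith
    have := hupper C (K - max (C - K + 1) 0 - 2) 1 K one_pos hC
      (hInf_pos _ (by rw [hmb]; exact EReal.bot_lt_coe _)) hgap
    exact this.mono fun r hr => EReal.coe_lt_coe_iff.mpr hr
  · rcases eq_or_ne M ⊤ with hMt | hMt
    · -- M = ⊤ : limit is ⊤
      obtain ⟨C, hC⟩ : ∃ C : ℝ, ∀ᵐ x ∂μ, -C ≤ f' x := by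
        rcases hbd' with h | ⟨C, hC⟩
        · exact h
        · exfalso
          have : M ≤ ((C : ℝ) : EReal) := by
            rw [← hM]
            exact essSup_le_of_ae_le _ (hC.mono fun x hx => EReal.coe_le_coe_iff.mpr hx)
          rw [hMt, top_le_iff] at this
          exact EReal.coe_ne_top _ this
      lift m to ℝ using ⟨hmnetop, hmb⟩ with mr hmr
      rw [hMt, EReal.coe_add_top]
      have htop2 : (⊤ : EReal) / 2 = ⊤ :=
        EReal.top_div_of_pos_ne_top (by norm_num) (by exact_mod_cast EReal.coe_ne_top 2)
      rw [htop2, EReal.tendsto_nhds_top_iff_real]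
      intro K
      have hgap : max (C + K + 1) 0 < -K + (max (C + K + 1) 0 + K + 2) - 1 := by linarith
      have := hlower C (max (C + K + 1) 0 + K + 2) 1 (-K) one_pos hC
        (hSup_pos _ (by rw [hMt]; exact EReal.coe_lt_top _)) (by simpa using hgap)
      exact this.mono fun r hr => EReal.coe_lt_coe_iff.mpr (by linarith)
    · -- both finite
      lift M to ℝ using ⟨hMt, hMnebot⟩ with Mr hMr
      lift m to ℝ using ⟨hmnetop, hmb⟩ with mr hmr
      have hfA : ∀ᵐ x ∂μ, f' x ≤ Mr := by
        filter_upwards [ae_le_essSup (f := fun x => (f' x : EReal)) (μ := μ)] with x hx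
        rw [hM] at hx
        exact EReal.coe_le_coe_iff.mp hx
      have hfm : ∀ᵐ x ∂μ, mr ≤ f' x := by
        filter_upwards [ae_essInf_le (f := fun x => (f' x : EReal)) (μ := μ)] with x hx
        rw [hm] at hx
        exact EReal.coe_le_coe_iff.mp hx
      have hmM : mr ≤ Mr := by
        obtain ⟨x, hx1, hx2⟩ := (hfA.and hfm).exists
        linarith
      set c := (mr + Mr) / 2 with hc
      have hR : 0 ≤ (Mr - mr) / 2 := by linarith
      have htc : Tendsto τ atTop (nhds c) := by
        rw [Metric.tendsto_nhds]
        intro ε hε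
        have hup : ∀ᶠ r : ℝ in atTop, τ r < c + ε / 2 := by
          apply hupper Mr (mr + ε / 8) (ε / 8) (c + ε / 2) (by linarith) hfA
          · exact hInf_pos _ (EReal.coe_lt_coe_iff.mpr (by linarith))
          · apply max_lt
            · rw [hc]; linarith
            · rw [hc]; linarith
        have hlo : ∀ᶠ r : ℝ in atTop, c - ε / 2 < τ r := by
          have := hlower (-mr) (Mr - ε / 8) (ε / 8) (-(c - ε / 2)) (by linarith)
            (hfm.mono fun x hx => by linarith)
            (hSup_pos _ (EReal.coe_lt_coe_iff.mpr (by linarith)))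
            (by apply max_lt
                · rw [hc]; linarith
                · rw [hc]; linarith)
          exact this.mono fun r hr => by linarith
        filter_upwards [hup, hlo] with r h1 h2
        rw [Real.dist_eq, abs_sub_lt_iff]
        constructor <;> linarith
      have hcoe : ((mr : EReal) + (Mr : EReal)) / 2 = ((c : ℝ) : EReal) := by
        rw [hc, ← EReal.coe_add, EReal.coe_div]
        norm_cast
      rw [hcoe]
      exact (continuous_coe_real_ereal.tendsto c).comp htc
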